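/- Let X be a real normed space, let f : ℝ × X → X satisfy |f(t,x)| ≤ μ and |f(t,x₁) − f(t,x₂)| ≤ γ|x₁ − x₂|, let 0 < q < 1, p > 0, and let ω : ℝ × X → X satisfy |ω(t,y₁) − ω(t,y₂)| ≤ p|y₁ − y₂|^q for all t, y₁, y₂. Then for all t, y₁, y₂: |f(t, y₁ + ω(t,y₁)) − f(t, y₂ + ω(t,y₂))| ≤ m(1+p)|y₁ − y₂|^q, where m = max{γ, 2μ^{1−q}γ^q}. -/
import Mathlib

lemma min_le_rpow_interp (a b q : ℝ) (ha : 0 ≤ a) (hb : 0 ≤ b) (hq0 : 0 ≤ q) (hq1 : q ≤ 1) :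
    min a b ≤ a ^ (1 - q) * b ^ q := by
  have hprod : 0 ≤ a ^ (1 - q) * b ^ q :=
    mul_nonneg (Real.rpow_nonneg ha _) (Real.rpow_nonneg hb _)
  rcases le_total a b with h | h
  · rcases eq_or_lt_of_le ha with h0 | h0
    · rw [min_eq_left h, ← h0]; positivity
    · have heq : a = a ^ (1 - q) * a ^ q := by
        rw [← Real.rpow_add h0]; simp
      rw [min_eq_left h]
      nth_rewrite 1 [heq]
      exact mul_le_mul_of_nonneg_left (Real.rpow_le_rpow ha h hq0) (Real.rpow_nonneg ha _)
  · rcases eq_or_lt_of_le hb with h0 | h0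
    · rw [min_eq_right h, ← h0]; positivity
    · have heq : b = b ^ (1 - q) * b ^ q := by
        rw [← Real.rpow_add h0]; simp
      rw [min_eq_right h]
      nth_rewrite 1 [heq]
      exact mul_le_mul_of_nonneg_right (Real.rpow_le_rpow hb h (by linarith))
        (Real.rpow_nonneg hb _)

/-- **(Formula (3.34).)**  If `f : ℝ × X → X` is bounded by `μ` and Lipschitz with
constant `γ` in its second variable, `0 < q < 1`, `p > 0`, and `ω` is `q`-Hölder with
constant `p` in its second variable, then
`‖f(t, y₁ + ω(t,y₁)) − f(t, y₂ + ω(t,y₂))‖ ≤ m(1+p)‖y₁ − y₂‖^q`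
with `m = max{γ, 2μ^{1−q}γ^q}`. -/
theorem holder_composition_bound {X : Type*} [NormedAddCommGroup X] [NormedSpace ℝ X]
    (f ω : ℝ → X → X) (μ γ q p : ℝ) (hμ : 0 ≤ μ) (hγ : 0 ≤ γ)
    (hq0 : 0 < q) (hq1 : q < 1) (hp : 0 < p)
    (hfb : ∀ t x, ‖f t x‖ ≤ μ)
    (hflip : ∀ t x₁ x₂, ‖f t x₁ - f t x₂‖ ≤ γ * ‖x₁ - x₂‖)
    (hω : ∀ t y₁ y₂, ‖ω t y₁ - ω t y₂‖ ≤ p * ‖y₁ - y₂‖ ^ q) :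
    ∀ t (y₁ y₂ : X), ‖f t (y₁ + ω t y₁) - f t (y₂ + ω t y₂)‖ ≤
      max γ (2 * μ ^ (1 - q) * γ ^ q) * (1 + p) * ‖y₁ - y₂‖ ^ q := by
  intro t y₁ y₂
  set d := ‖y₁ - y₂‖ with hdef
  have hd0 : 0 ≤ d := norm_nonneg _
  have hdq0 : 0 ≤ d ^ q := Real.rpow_nonneg hd0 q
  set s := ‖(y₁ + ω t y₁) - (y₂ + ω t y₂)‖ with hsdef
  have hs0 : 0 ≤ s := norm_nonneg _
  have hs : s ≤ d + p * d ^ q := by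
    have h1 : (y₁ + ω t y₁) - (y₂ + ω t y₂) = (y₁ - y₂) + (ω t y₁ - ω t y₂) := by abel
    calc s = ‖(y₁ - y₂) + (ω t y₁ - ω t y₂)‖ := by rw [hsdef, h1]
      _ ≤ ‖y₁ - y₂‖ + ‖ω t y₁ - ω t y₂‖ := norm_add_le _ _
      _ ≤ d + p * d ^ q := by exact add_le_add le_rfl (hω t y₁ y₂)
  have hm2nn : 0 ≤ 2 * μ ^ (1 - q) * γ ^ q :=
    mul_nonneg (mul_nonneg (by norm_num) (Real.rpow_nonneg hμ _)) (Real.rpow_nonneg hγ _)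
  rcases le_or_gt d 1 with h1 | h1
  · have hdd : d ≤ d ^ q := by
      rcases eq_or_lt_of_le hd0 with h0 | h0
      · rw [← h0, Real.zero_rpow hq0.ne']
      · calc d = d ^ (1 : ℝ) := (Real.rpow_one d).symm
          _ ≤ d ^ q := Real.rpow_le_rpow_of_exponent_ge h0 h1 hq1.le
    calc ‖f t (y₁ + ω t y₁) - f t (y₂ + ω t y₂)‖ ≤ γ * s := hflip t _ _
      _ ≤ γ * (d + p * d ^ q) := mul_le_mul_of_nonneg_left hs hγ
      _ ≤ γ * (d ^ q + p * d ^ q) := by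
          apply mul_le_mul_of_nonneg_left _ hγ
          exact add_le_add hdd le_rfl
      _ = γ * (1 + p) * d ^ q := by ring
      _ ≤ max γ (2 * μ ^ (1 - q) * γ ^ q) * (1 + p) * d ^ q :=
          mul_le_mul_of_nonneg_right
            (mul_le_mul_of_nonneg_right (le_max_left _ _) (by linarith)) hdq0
  · -- d > 1
    have hmin : ‖f t (y₁ + ω t y₁) - f t (y₂ + ω t y₂)‖ ≤ min (2 * μ) (γ * s) := by
      refine le_min ?_ (hflip t _ _)
      calc ‖f t (y₁ + ω t y₁) - f t (y₂ + ω t y₂)‖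
          ≤ ‖f t (y₁ + ω t y₁)‖ + ‖f t (y₂ + ω t y₂)‖ := norm_sub_le _ _
        _ ≤ μ + μ := add_le_add (hfb t _) (hfb t _)
        _ = 2 * μ := by ring
    have hinterp : min (2 * μ) (γ * s) ≤ (2 * μ) ^ (1 - q) * (γ * s) ^ q :=
      min_le_rpow_interp _ _ q (by linarith) (mul_nonneg hγ hs0) hq0.le hq1.le
    have h2 : (2 * μ) ^ (1 - q) ≤ 2 * μ ^ (1 - q) := by
      rw [Real.mul_rpow (by norm_num) hμ]
      refine mul_le_mul_of_nonneg_right ?_ (Real.rpow_nonneg hμ _)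
      calc (2 : ℝ) ^ (1 - q) ≤ (2 : ℝ) ^ (1 : ℝ) :=
            Real.rpow_le_rpow_of_exponent_le (by norm_num) (by linarith)
        _ = 2 := Real.rpow_one 2
    have hsd : s ≤ (1 + p) * d := by
      have : d ^ q ≤ d := by
        calc d ^ q ≤ d ^ (1 : ℝ) := Real.rpow_le_rpow_of_exponent_le h1.le hq1.le
          _ = d := Real.rpow_one d
      nlinarith
    have hsq : (γ * s) ^ q ≤ γ ^ q * ((1 + p) * d ^ q) := by
      rw [Real.mul_rpow hγ hs0]
      apply mul_le_mul_of_nonneg_left _ (Real.rpow_nonneg hγ _)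
      calc s ^ q ≤ ((1 + p) * d) ^ q := Real.rpow_le_rpow hs0 hsd hq0.le
        _ = (1 + p) ^ q * d ^ q := Real.mul_rpow (by linarith) hd0
        _ ≤ (1 + p) * d ^ q := by
            apply mul_le_mul_of_nonneg_right _ hdq0
            calc (1 + p) ^ q ≤ (1 + p) ^ (1 : ℝ) :=
                Real.rpow_le_rpow_of_exponent_le (by linarith) hq1.le
              _ = 1 + p := Real.rpow_one _
    calc ‖f t (y₁ + ω t y₁) - f t (y₂ + ω t y₂)‖
        ≤ (2 * μ) ^ (1 - q) * (γ * s) ^ q := hmin.trans hinterp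
      _ ≤ (2 * μ ^ (1 - q)) * (γ ^ q * ((1 + p) * d ^ q)) := by
          apply mul_le_mul h2 hsq (Real.rpow_nonneg (mul_nonneg hγ hs0) _)
            (by positivity)
      _ = (2 * μ ^ (1 - q) * γ ^ q) * (1 + p) * d ^ q := by ring
      _ ≤ max γ (2 * μ ^ (1 - q) * γ ^ q) * (1 + p) * d ^ q :=
          mul_le_mul_of_nonneg_right
            (mul_le_mul_of_nonneg_right (le_max_right _ _) (by linarith)) hdq0
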